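/- Let ε>0, M≥1 an integer, ε<Δx, and 0<δx≤ε/(2M+1). For m∈{-M,…,M} let L_m∈ℤ, α_m∈[0,1/Δx) satisfy m/ε=L_m/Δx+α_m and set w_m=e^{2πi L_m δx/Δx}. Then for every l with −M≤l≤M−1 one has |w_{l+1}−w_l| > |e^{2πi(1/ε−1/Δx)δx}−1|, and also |w_M−w_{-M}| > |e^{2πi(1/ε−1/Δx)δx}−1|; moreover |e^{2πi(1/ε−1/Δx)δx}−1| = 2·sin(π(1/ε−1/Δx)δx) > 0. -/

import Mathlib

open MeasureTheory Complex Filter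
open scoped ENNReal


lemma norm_exp2pi_sub_one (s : ℝ) :
    ‖Complex.exp (2 * Real.pi * Complex.I * s) - 1‖ = 2 * |Real.sin (Real.pi * s)| := by
  have h1 : (2 * Real.pi * Complex.I * s : ℂ)
      = ↑(Real.pi * s) * I + ↑(Real.pi * s) * I := by push_cast; ring
  have h2 : Complex.exp (2 * Real.pi * Complex.I * s) - 1
      = Complex.exp (↑(Real.pi * s) * I) *
        (Complex.exp (↑(Real.pi * s) * I) - Complex.exp (-(↑(Real.pi * s) * I))) := by
    rw [mul_sub, ← Complex.exp_add, ← Complex.exp_add, h1]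
    simp
  have h3 : Complex.exp (↑(Real.pi * s) * I) - Complex.exp (-(↑(Real.pi * s) * I))
      = 2 * (↑(Real.sin (Real.pi * s)) : ℂ) * I := by
    rw [Complex.ofReal_sin, Complex.sin]
    field_simp
    rw [Complex.I_sq]
    ring
  rw [h2, h3, norm_mul, Complex.norm_exp_ofReal_mul_I, one_mul, norm_mul, norm_mul,
    Complex.norm_I, mul_one, Complex.norm_real, Real.norm_eq_abs]
  norm_num

lemma norm_exp2pi_sub (s t : ℝ) :
    ‖Complex.exp (2 * Real.pi * Complex.I * s) - Complex.exp (2 * Real.pi * Complex.I * t)‖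
      = 2 * |Real.sin (Real.pi * (s - t))| := by
  have h0 : Complex.exp (2 * Real.pi * Complex.I * s) - Complex.exp (2 * Real.pi * Complex.I * t)
      = Complex.exp (2 * Real.pi * Complex.I * t) *
        (Complex.exp (2 * Real.pi * Complex.I * ((s - t : ℝ) : ℂ)) - 1) := by
    rw [mul_sub, ← Complex.exp_add, mul_one]
    push_cast
    ring_nf
  have h4 : (2 * ↑Real.pi * I * (t:ℂ)) = ((2*Real.pi*t : ℝ) : ℂ) * I := by push_cast; ring
  rw [h0, norm_mul, h4, Complex.norm_exp_ofReal_mul_I, one_mul, norm_exp2pi_sub_one]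

lemma sin_pi_lt (a x : ℝ) (ha : 0 < a) (hax : a < x) (hx1 : x < 1 - a) :
    Real.sin (Real.pi * a) < Real.sin (Real.pi * x) := by
  have ha2 : a < 1/2 := by linarith
  have hpi := Real.pi_pos
  rcases le_or_gt x (1/2) with h | h
  · exact Real.strictMonoOn_sin ⟨by nlinarith, by nlinarith⟩ ⟨by nlinarith, by nlinarith⟩
      (by nlinarith)
  · have hsx : Real.sin (Real.pi * x) = Real.sin (Real.pi * (1 - x)) := by
      rw [mul_sub, mul_one, Real.sin_pi_sub]
    rw [hsx]
    exact Real.strictMonoOn_sin ⟨by nlinarith, by nlinarith⟩ ⟨by nlinarith, by nlinarith⟩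
      (by nlinarith)

lemma node_gap (a x : ℝ) (ha : 0 < a) (hax : a < x) (hx1 : x < 1 - a) :
    2 * Real.sin (Real.pi * a) < 2 * |Real.sin (Real.pi * x)| := by
  have h := sin_pi_lt a x ha hax hx1
  have h2 : Real.sin (Real.pi * x) ≤ |Real.sin (Real.pi * x)| := le_abs_self _
  linarith


/-- **Separation of the Vandermonde nodes.**  With `m/ε = L_m/Δx + α_m`
(`L_m ∈ ℤ`, `α_m ∈ [0,1/Δx)`), `w_m = e^{2πi L_m δx/Δx}`: adjacent nodes satisfy
`|w_{l+1} - w_l| > |e^{2πi(1/ε-1/Δx)δx} - 1|` for `-M ≤ l ≤ M-1`, as well as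
`|w_M - w_{-M}| > |e^{2πi(1/ε-1/Δx)δx} - 1|`; moreover
`|e^{2πi(1/ε-1/Δx)δx} - 1| = 2 sin(π(1/ε-1/Δx)δx) > 0`. -/
theorem vandermonde_nodes_separation
    (ε Δx δx : ℝ) (M : ℕ)
    (hM : 1 ≤ M) (hε : 0 < ε) (hΔx : ε < Δx)
    (hδx : 0 < δx) (hδx2 : δx ≤ ε / (2 * M + 1))
    (L : ℤ → ℤ) (α : ℤ → ℝ)
    (hdecomp : ∀ m : ℤ, |m| ≤ (M : ℤ) →
      (m : ℝ) / ε = (L m : ℝ) / Δx + α m ∧ 0 ≤ α m ∧ α m < 1 / Δx) :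
    (∀ l : ℤ, -(M : ℤ) ≤ l → l ≤ (M : ℤ) - 1 →
      ‖Complex.exp (2 * Real.pi * Complex.I * ((L (l + 1) : ℝ) * δx / Δx)) -
          Complex.exp (2 * Real.pi * Complex.I * ((L l : ℝ) * δx / Δx))‖ >
        ‖Complex.exp (2 * Real.pi * Complex.I * ((1 / ε - 1 / Δx) * δx)) - 1‖) ∧
    (‖Complex.exp (2 * Real.pi * Complex.I * ((L (M : ℤ) : ℝ) * δx / Δx)) -
          Complex.exp (2 * Real.pi * Complex.I * ((L (-(M : ℤ)) : ℝ) * δx / Δx))‖ >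
        ‖Complex.exp (2 * Real.pi * Complex.I * ((1 / ε - 1 / Δx) * δx)) - 1‖) ∧
    (‖Complex.exp (2 * Real.pi * Complex.I * ((1 / ε - 1 / Δx) * δx)) - 1‖ =
        2 * Real.sin (Real.pi * (1 / ε - 1 / Δx) * δx)) ∧
    (0 < 2 * Real.sin (Real.pi * (1 / ε - 1 / Δx) * δx)) := by
  have hΔ0 : (0:ℝ) < Δx := lt_trans hε hΔx
  have hu : (0:ℝ) < 1/ε := by positivity
  have hv : (0:ℝ) < 1/Δx := by positivity
  have hvu : 1/Δx < 1/ε := one_div_lt_one_div_of_lt hε hΔx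
  set a : ℝ := (1/ε - 1/Δx) * δx with ha_def
  have ha : 0 < a := by
    apply mul_pos _ hδx; linarith
  -- (2M+1) δx ≤ ε
  have hM1 : (1:ℝ) ≤ (M:ℝ) := by exact_mod_cast hM
  have hMε : (2*(M:ℝ)+1) * δx ≤ ε := by
    rw [div_eq_mul_inv] at hδx2
    have h2M : (0:ℝ) < 2*(M:ℝ)+1 := by linarith
    calc (2*(M:ℝ)+1) * δx ≤ (2*(M:ℝ)+1) * (ε * (2*(M:ℝ)+1)⁻¹) := by
          apply mul_le_mul_of_nonneg_left _ (le_of_lt h2M)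
          exact_mod_cast hδx2
      _ = ε := by field_simp
  have h3δ : 3 * δx ≤ ε := by nlinarith
  -- key products with 1/ε
  have hMu : (2*(M:ℝ)+1) * δx * (1/ε) ≤ 1 := by
    rw [mul_one_div]
    rw [div_le_one hε]; exact hMε
  have h2u : 2 * δx * (1/ε) ≤ 2/3 := by
    rw [mul_one_div, div_le_div_iff₀ hε (by norm_num : (0:ℝ) < 3)]
    linarith
  have haδ : a < δx * (1/ε) := by
    rw [ha_def]; nlinarith
  have ha3 : a < 1/3 := by nlinarith
  -- the fixed RHS norm
  have hcast : (2 * (Real.pi:ℂ) * Complex.I * ((1 / (ε:ℂ) - 1 / (Δx:ℂ)) * (δx:ℂ)))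
      = 2 * (Real.pi:ℂ) * Complex.I * ((a : ℝ) : ℂ) := by
    rw [ha_def]; push_cast; ring
  have hsin_pos : 0 < Real.sin (Real.pi * a) := by
    apply Real.sin_pos_of_pos_of_lt_pi
    · positivity
    · nlinarith [Real.pi_pos]
  have hR : ‖Complex.exp (2 * Real.pi * Complex.I * ((1 / ε - 1 / Δx) * δx : ℂ)) - 1‖
      = 2 * Real.sin (Real.pi * a) := by
    rw [show (((1:ℂ) / ε - 1 / Δx) * δx) = ((a:ℝ) : ℂ) by rw [ha_def]; push_cast; ring,
      norm_exp2pi_sub_one, abs_of_pos hsin_pos]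
  -- a generic bound handler
  have main : ∀ s t : ℝ, a < s - t → s - t < 1 - a →
      ‖Complex.exp (2 * Real.pi * Complex.I * (s:ℂ)) -
        Complex.exp (2 * Real.pi * Complex.I * (t:ℂ))‖ >
      ‖Complex.exp (2 * Real.pi * Complex.I * ((1 / ε - 1 / Δx) * δx : ℂ)) - 1‖ := by
    intro s t h1 h2
    rw [norm_exp2pi_sub, hR]
    exact node_gap a (s-t) ha h1 h2
  refine ⟨?_, ?_, ?_, ?_⟩
  · intro l hl1 hl2
    obtain ⟨e1, b1, b1'⟩ := hdecomp l (by rw [abs_le]; omega)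
    obtain ⟨e2, b2, b2'⟩ := hdecomp (l+1) (by rw [abs_le]; omega)
    have hs : ((L (l+1) : ℝ) * (δx:ℝ) / Δx : ℂ) = (((L (l+1) : ℝ) * δx / Δx : ℝ) : ℂ) := by
      push_cast; ring
    have ht : ((L l : ℝ) * (δx:ℝ) / Δx : ℂ) = (((L l : ℝ) * δx / Δx : ℝ) : ℂ) := by
      push_cast; ring
    rw [hs, ht]
    apply main
    · have hadd : ((l:ℝ)+1)/ε = (l:ℝ)/ε + 1/ε := by rw [add_div]
      push_cast at e2
      have hdiff : (L (l+1) : ℝ)/Δx - (L l : ℝ)/Δx = 1/ε - α (l+1) + α l := by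
        linear_combination e1 - e2
      have hst : (L (l+1) : ℝ) * δx / Δx - (L l : ℝ) * δx / Δx
          = ((L (l+1) : ℝ)/Δx - (L l : ℝ)/Δx) * δx := by ring
      rw [hst, hdiff, ha_def]
      linarith [mul_lt_mul_of_pos_right b2' hδx, mul_nonneg b1 hδx.le]
    · have hadd : ((l:ℝ)+1)/ε = (l:ℝ)/ε + 1/ε := by rw [add_div]
      push_cast at e2
      have hdiff : (L (l+1) : ℝ)/Δx - (L l : ℝ)/Δx = 1/ε - α (l+1) + α l := by
        linear_combination e1 - e2
      have hst : (L (l+1) : ℝ) * δx / Δx - (L l : ℝ) * δx / Δx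
          = ((L (l+1) : ℝ)/Δx - (L l : ℝ)/Δx) * δx := by ring
      rw [hst, hdiff, ha_def]
      linarith [mul_nonneg b2 hδx.le, mul_lt_mul_of_pos_right b1' hδx, h2u]
  · obtain ⟨e1, b1, b1'⟩ := hdecomp (-(M:ℤ)) (by rw [abs_le]; omega)
    obtain ⟨e2, b2, b2'⟩ := hdecomp (M:ℤ) (by rw [abs_le]; omega)
    have hs : ((L (M:ℤ) : ℝ) * (δx:ℝ) / Δx : ℂ) = (((L (M:ℤ) : ℝ) * δx / Δx : ℝ) : ℂ) := by
      push_cast; ring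
    have ht : ((L (-(M:ℤ)) : ℝ) * (δx:ℝ) / Δx : ℂ) = (((L (-(M:ℤ)) : ℝ) * δx / Δx : ℝ) : ℂ) := by
      push_cast; ring
    rw [hs, ht]
    push_cast at e1 e2
    have hdiff : (L (M:ℤ) : ℝ)/Δx - (L (-(M:ℤ)) : ℝ)/Δx
        = 2*(M:ℝ)*(1/ε) - α (M:ℤ) + α (-(M:ℤ)) := by
      linear_combination e1 - e2
    have hst : (L (M:ℤ) : ℝ) * δx / Δx - (L (-(M:ℤ)) : ℝ) * δx / Δx
        = ((L (M:ℤ) : ℝ)/Δx - (L (-(M:ℤ)) : ℝ)/Δx) * δx := by ring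
    apply main
    · rw [hst, hdiff, ha_def]
      have f1 : 0 ≤ ((M:ℝ)-1) * ((1/ε)*δx) :=
        mul_nonneg (by linarith) (by positivity)
      linarith [mul_lt_mul_of_pos_right b2' hδx, mul_nonneg b1 hδx.le,
        mul_pos hu hδx, f1]
    · rw [hst, hdiff, ha_def]
      linarith [mul_nonneg b2 hδx.le, mul_lt_mul_of_pos_right b1' hδx, hMu]
  · rw [hR, ha_def]; ring_nf
  · have : Real.pi * (1/ε - 1/Δx) * δx = Real.pi * a := by rw [ha_def]; ring
    rw [this]; linarith
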